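/- For a Laplace random variable L with scale 1/γ and any real t ≥ 0, Pr[L > t] = (1/2)e^{-γt}, and consequently for two independent Laplace(1/γ) variables L₁, L₂ and any real gap g ≥ 0, Pr[L₂ − L₁ > g] = (2 + γg)e^{-γg}/4. -/

import Mathlib

open MeasureTheory ProbabilityTheory Real
open Set

section LaplaceAux
open Set

lemma intExpIoi {b : ℝ} (hb : 0 < b) (a : ℝ) :
    ∫ x in Ioi a, exp (-(b * x)) = exp (-(b * a)) / b := by
  have := integral_comp_mul_left_Ioi (fun x => exp (-x)) a hb
  simp only [smul_eq_mul] at this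
  rw [this, integral_exp_neg_Ioi]
  field_simp

lemma intExpIic {b : ℝ} (hb : 0 < b) (a : ℝ) :
    ∫ x in Iic a, exp (b * x) = exp (b * a) / b := by
  have : ∫ x in Iic a, exp (b * x) = ∫ x in Iic a, exp (-(b * (-x))) := by
    congr 1; ext x; ring_nf
  rw [this, integral_comp_neg_Iic a (fun x => exp (-(b * x))), intExpIoi hb]
  ring_nf

lemma intgOnIoi {b : ℝ} (hb : 0 < b) (a : ℝ) :
    IntegrableOn (fun x => exp (-(b * x))) (Ioi a) := by
  simpa [neg_mul] using exp_neg_integrableOn_Ioi a hb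

lemma intgOnIic {b : ℝ} (hb : 0 < b) (a : ℝ) :
    IntegrableOn (fun x => exp (b * x)) (Iic a) := by
  have m : MeasurableEmbedding fun x : ℝ => -x := (Homeomorph.neg ℝ).measurableEmbedding
  have h : IntegrableOn (fun x => exp (b * x)) (Iic a) (volume.map fun x : ℝ => -x) := by
    rw [m.integrableOn_map_iff]
    have : ((fun x => exp (b * x)) ∘ fun x : ℝ => -x) = fun x => exp (-(b * x)) := by
      ext x; simp [Function.comp, mul_neg, neg_mul]
    rw [this]
    have : (fun x : ℝ => -x) ⁻¹' Iic a = Ici (-a) := by ext x; simp [neg_le]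
    rw [this]
    exact (integrableOn_Ici_iff_integrableOn_Ioi).mpr (intgOnIoi hb (-a))
  rwa [Measure.map_neg_eq_self] at h

section Lap
variable {γ : ℝ} (hγ : 0 < γ)

lemma lapCont : Continuous (fun x : ℝ => γ / 2 * exp (-γ * |x|)) := by
  fun_prop

include hγ

lemma lapInt : Integrable (fun x : ℝ => γ / 2 * exp (-γ * |x|)) := by
  rw [← integrableOn_univ, ← Iic_union_Ioi (a := (0:ℝ))]
  apply IntegrableOn.union
  · refine IntegrableOn.congr_fun ((intgOnIic hγ 0).const_mul (γ/2)) ?_ measurableSet_Iic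
    intro x hx
    simp only [abs_of_nonpos (mem_Iic.mp hx)]
    ring_nf
  · refine IntegrableOn.congr_fun ((intgOnIoi hγ 0).const_mul (γ/2)) ?_ measurableSet_Ioi
    intro x hx
    simp only [abs_of_pos (mem_Ioi.mp hx)]
    ring_nf

noncomputable def lapT (γ s : ℝ) : ℝ :=
  if 0 ≤ s then exp (-(γ * s)) / 2 else 1 - exp (γ * s) / 2

omit hγ in
lemma measurable_lapT (γ : ℝ) : Measurable (lapT γ) := by
  unfold lapT
  exact Measurable.ite (measurableSet_le measurable_const measurable_id)
    (by fun_prop) (by fun_prop)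

lemma lapT_nonneg (s : ℝ) : 0 ≤ lapT γ s := by
  rw [lapT]; split_ifs with h
  · positivity
  · have : exp (γ * s) ≤ 1 := by
      rw [exp_le_one_iff]
      exact mul_nonpos_of_nonneg_of_nonpos hγ.le (le_of_lt (not_le.mp h))
    linarith

lemma lapT_le_one (s : ℝ) : lapT γ s ≤ 1 := by
  rw [lapT]; split_ifs with h
  · have : exp (-(γ * s)) ≤ 1 := by
      rw [exp_le_one_iff]
      simp only [neg_nonpos]
      positivity
    linarith
  · have : 0 < exp (γ * s) := exp_pos _
    linarith

lemma lapTailReal_nonneg {s : ℝ} (hs : 0 ≤ s) :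
    ∫ x in Ioi s, γ / 2 * exp (-γ * |x|) = exp (-(γ * s)) / 2 := by
  rw [setIntegral_congr_fun measurableSet_Ioi
    (g := fun x => γ / 2 * exp (-(γ * x))) (fun x hx => by
      rw [abs_of_pos (lt_of_le_of_lt hs hx)]; ring_nf),
    integral_const_mul, intExpIoi hγ]
  field_simp

lemma lapTailReal_neg {s : ℝ} (hs : s < 0) :
    ∫ x in Ioi s, γ / 2 * exp (-γ * |x|) = 1 - exp (γ * s) / 2 := by
  have hIoc : IntegrableOn (fun x : ℝ => γ / 2 * exp (-γ * |x|)) (Ioc s 0) :=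
    (lapInt hγ).integrableOn
  have hIoi : IntegrableOn (fun x : ℝ => γ / 2 * exp (-γ * |x|)) (Ioi 0) :=
    (lapInt hγ).integrableOn
  rw [← Ioc_union_Ioi_eq_Ioi hs.le,
    setIntegral_union (Ioc_disjoint_Ioi le_rfl) measurableSet_Ioi hIoc hIoi,
    lapTailReal_nonneg hγ le_rfl]
  have h1 : ∫ x in Ioc s 0, γ / 2 * exp (-γ * |x|)
      = γ / 2 * ∫ x in Ioc s 0, exp (γ * x) := by
    rw [← integral_const_mul]
    refine setIntegral_congr_fun measurableSet_Ioc (fun x hx => ?_)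
    rw [abs_of_nonpos hx.2]; ring_nf
  have h2 : (∫ x in Iic s, exp (γ * x)) + ∫ x in Ioc s 0, exp (γ * x)
      = ∫ x in Iic 0, exp (γ * x) := by
    rw [← setIntegral_union (Iic_disjoint_Ioc le_rfl) measurableSet_Ioc
      (intgOnIic hγ s) ((intgOnIic hγ 0).mono_set Ioc_subset_Iic_self),
      Iic_union_Ioc_eq_Iic hs.le]
  rw [intExpIic hγ, intExpIic hγ] at h2
  rw [h1]
  have : ∫ x in Ioc s 0, exp (γ * x) = exp (γ * 0) / γ - exp (γ * s) / γ := by linarith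
  rw [this]
  simp only [mul_zero, neg_zero, exp_zero]
  field_simp
  ring

lemma lapTail (s : ℝ) :
    (volume.withDensity fun x : ℝ => ENNReal.ofReal (γ / 2 * exp (-γ * |x|))) (Ioi s)
      = ENNReal.ofReal (lapT γ s) := by
  rw [lapT]
  rw [withDensity_apply _ measurableSet_Ioi,
    ← ofReal_integral_eq_lintegral_ofReal ((lapInt hγ).integrableOn)
      (ae_of_all _ (fun x => by positivity))]
  split_ifs with h
  · rw [lapTailReal_nonneg hγ h]
  · rw [lapTailReal_neg hγ (not_le.mp h)]

lemma lapDiffIntegrable (g : ℝ) :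
    Integrable (fun x : ℝ => γ / 2 * exp (-γ * |x|) * lapT γ (g + x)) := by
  refine (lapInt hγ).mono ?_ (ae_of_all _ fun x => ?_)
  · exact (((lapInt hγ).aestronglyMeasurable).mul
      ((measurable_lapT γ).comp (measurable_id.const_add g)).aestronglyMeasurable)
  · rw [norm_mul]
    have h1 : ‖lapT γ (g + x)‖ ≤ 1 :=
      abs_le.mpr ⟨by linarith [lapT_nonneg hγ (g + x)], lapT_le_one hγ (g + x)⟩
    nlinarith [norm_nonneg (γ / 2 * exp (-γ * |x|))]

lemma lapDiffReal {g : ℝ} (hg : 0 ≤ g) :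
    ∫ x : ℝ, γ / 2 * exp (-γ * |x|) * lapT γ (g + x)
      = (2 + γ * g) * exp (-(γ * g)) / 4 := by
  set f : ℝ → ℝ := fun x => γ / 2 * exp (-γ * |x|) * lapT γ (g + x) with hf
  have hint := lapDiffIntegrable hγ g
  have hsplit1 : (∫ x in Iio (-g), f x) + ∫ x in Ici (-g), f x = ∫ x, f x :=
    intervalIntegral.integral_Iio_add_Ici hint.integrableOn hint.integrableOn
  have hsplit2 : (∫ x in Ico (-g) 0, f x) + ∫ x in Ici 0, f x = ∫ x in Ici (-g), f x := by
    rw [← setIntegral_union ((Iio_disjoint_Ici le_rfl).mono_left Ico_subset_Iio_self)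
      measurableSet_Ici hint.integrableOn hint.integrableOn,
      Ico_union_Ici_eq_Ici (neg_nonpos.mpr hg)]
  have hng : -g ≤ 0 := neg_nonpos.mpr hg
  have J1 : ∫ x in Iio (-g), f x
      = ∫ x in Iio (-g), (γ / 2 * exp (γ * x) - γ / 4 * exp (γ * g) * exp (2 * γ * x)) := by
    refine setIntegral_congr_fun measurableSet_Iio fun x hx => ?_
    have hx' : x < -g := hx
    have h1 : |x| = -x := abs_of_nonpos (by linarith)
    have h2 : lapT γ (g + x) = 1 - exp (γ * (g + x)) / 2 := by
      rw [lapT, if_neg (by push_neg; linarith)]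
    rw [hf]
    simp only [h1, h2]
    rw [show exp (γ * (g + x)) = exp (γ * g) * exp (2 * γ * x) / exp (γ * x) by
      rw [← exp_add, ← exp_sub]; ring_nf]
    have := exp_pos (γ * x)
    have h3 : -γ * -x = γ * x := by ring
    rw [h3]
    field_simp
    ring
  have J1v : ∫ x in Iio (-g), f x = 3 / 8 * exp (-(γ * g)) := by
    rw [J1, setIntegral_congr_set Iio_ae_eq_Iic, integral_sub
      ((intgOnIic hγ (-g)).const_mul _)
      (((intgOnIic (by linarith : (0:ℝ) < 2 * γ) (-g)).const_mul _))]
    rw [integral_const_mul, integral_const_mul,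
      intExpIic hγ, intExpIic (by linarith : (0:ℝ) < 2 * γ)]
    rw [show γ * -g = -(γ * g) by ring, show 2 * γ * -g = -(γ * g) + -(γ * g) by ring,
      exp_add]
    have h8 : exp (γ * g) * (exp (-(γ * g)) * exp (-(γ * g))) = exp (-(γ * g)) := by
      rw [← exp_add, ← exp_add]; congr 1; ring
    have h9 : exp (-(γ * g)) * exp (γ * g) = 1 := by rw [← exp_add]; simp
    field_simp
    linear_combination (-8) * h9
  have J2v : ∫ x in Ico (-g) 0, f x = γ * g / 4 * exp (-(γ * g)) := by
    have : ∀ x ∈ Ico (-g) 0, f x = γ / 4 * exp (-(γ * g)) := by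
      intro x hx
      have h1 : |x| = -x := abs_of_nonpos hx.2.le
      have h2 : lapT γ (g + x) = exp (-(γ * (g + x))) / 2 := by
        rw [lapT, if_pos (by linarith [hx.1])]
      rw [hf]; simp only [h1, h2]
      have h3 : exp (-(γ * g)) = exp (-γ * -x) * exp (-(γ * (g + x))) := by
        rw [← exp_add]; congr 1; ring
      rw [h3]; ring
    rw [setIntegral_congr_fun measurableSet_Ico this, setIntegral_const]
    rw [measureReal_def, Real.volume_Ico]
    rw [ENNReal.toReal_ofReal (by linarith)]
    simp only [smul_eq_mul]
    ring
  have J3v : ∫ x in Ici 0, f x = 1 / 8 * exp (-(γ * g)) := by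
    have : ∀ x ∈ Ici (0:ℝ), f x = γ / 4 * exp (-(γ * g)) * exp (-(2 * γ * x)) := by
      intro x hx
      have h1 : |x| = x := abs_of_nonneg hx
      have h2 : lapT γ (g + x) = exp (-(γ * (g + x))) / 2 := by
        rw [lapT, if_pos (by simp at hx; linarith)]
      rw [hf]; simp only [h1, h2]
      have h3 : exp (-(γ * g)) * exp (-(2 * γ * x)) = exp (-γ * x) * exp (-(γ * (g + x))) := by
        rw [← exp_add, ← exp_add]; congr 1; ring
      linear_combination (-(γ / 4)) * h3
    rw [setIntegral_congr_fun measurableSet_Ici this,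
      ← setIntegral_congr_set Ioi_ae_eq_Ici, integral_const_mul,
      intExpIoi (by linarith : (0:ℝ) < 2 * γ)]
    rw [show 2 * γ * 0 = 0 by ring]
    simp only [neg_zero, exp_zero]
    field_simp
    ring
  have := hsplit1
  rw [← hsplit2] at this
  rw [← this, J1v, J2v, J3v]
  ring

end Lap

end LaplaceAux

/-- For a Laplace random variable `L` with scale `1/γ` and `t ≥ 0`,
`Pr[L > t] = (1/2)e^{-γt}`; and for two independent Laplace(1/γ) variables `L₁, L₂`
and `g ≥ 0`, `Pr[L₂ - L₁ > g] = (2 + γg) e^{-γg} / 4`. -/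
theorem laplace_tail_and_diff_tail
    {Ω : Type*} [MeasureSpace Ω] [IsProbabilityMeasure (ℙ : Measure Ω)]
    (γ : ℝ) (hγ : 0 < γ)
    (L L₁ L₂ : Ω → ℝ)
    (hL : Measurable L) (hL₁ : Measurable L₁) (hL₂ : Measurable L₂)
    (hindep : IndepFun L₁ L₂ ℙ)
    (hpdf : ∀ X ∈ [L, L₁, L₂], Measure.map X ℙ =
      volume.withDensity (fun x => ENNReal.ofReal (γ / 2 * Real.exp (-γ * |x|))))
    (t g : ℝ) (ht : 0 ≤ t) (hg : 0 ≤ g) :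
    ℙ {ω | t < L ω} = ENNReal.ofReal ((1 / 2) * Real.exp (-γ * t)) ∧
    ℙ {ω | g < L₂ ω - L₁ ω} = ENNReal.ofReal ((2 + γ * g) * Real.exp (-γ * g) / 4) := by
  have hmapL := hpdf L (by simp)
  have hmap1 := hpdf L₁ (by simp)
  have hmap2 := hpdf L₂ (by simp)
  constructor
  · have hset : {ω | t < L ω} = L ⁻¹' (Ioi t) := rfl
    rw [hset, ← Measure.map_apply hL measurableSet_Ioi, hmapL, lapTail hγ, lapT, if_pos ht]
    congr 1
    ring_nf
  · have hSmeas : MeasurableSet {p : ℝ × ℝ | g < p.2 - p.1} :=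
      measurableSet_lt measurable_const (measurable_snd.sub measurable_fst)
    have hset : {ω | g < L₂ ω - L₁ ω} = (fun ω => (L₁ ω, L₂ ω)) ⁻¹' {p | g < p.2 - p.1} := rfl
    have hprod : Measure.map (fun ω => (L₁ ω, L₂ ω)) ℙ
        = (volume.withDensity fun x : ℝ => ENNReal.ofReal (γ / 2 * exp (-γ * |x|))).prod
          (volume.withDensity fun x : ℝ => ENNReal.ofReal (γ / 2 * exp (-γ * |x|))) := by
      rw [(indepFun_iff_map_prod_eq_prod_map_map hL₁.aemeasurable hL₂.aemeasurable).mp hindep,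
        hmap1, hmap2]
    rw [hset, ← Measure.map_apply (hL₁.prodMk hL₂) hSmeas, hprod,
      Measure.prod_apply hSmeas]
    have hslice : ∀ x : ℝ, (Prod.mk x ⁻¹' {p : ℝ × ℝ | g < p.2 - p.1}) = Ioi (g + x) := by
      intro x; ext y
      simp only [mem_preimage, mem_setOf_eq, mem_Ioi]
      constructor <;> intro h <;> linarith
    simp_rw [hslice, lapTail hγ]
    have hFmeas : Measurable fun x : ℝ => ENNReal.ofReal (γ / 2 * exp (-γ * |x|)) :=
      ENNReal.measurable_ofReal.comp lapCont.measurable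
    have hTmeas : Measurable fun x : ℝ => ENNReal.ofReal (lapT γ (g + x)) :=
      ENNReal.measurable_ofReal.comp ((measurable_lapT γ).comp (measurable_id.const_add g))
    rw [lintegral_withDensity_eq_lintegral_mul _ hFmeas hTmeas]
    simp only [Pi.mul_apply]
    have hmul : ∀ x : ℝ, ENNReal.ofReal (γ / 2 * exp (-γ * |x|)) * ENNReal.ofReal (lapT γ (g + x))
        = ENNReal.ofReal (γ / 2 * exp (-γ * |x|) * lapT γ (g + x)) :=
      fun x => (ENNReal.ofReal_mul (by positivity)).symm
    simp_rw [hmul]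
    rw [← ofReal_integral_eq_lintegral_ofReal (lapDiffIntegrable hγ g)
      (ae_of_all _ fun x => mul_nonneg (by positivity) (lapT_nonneg hγ _)),
      lapDiffReal hγ hg]
    congr 1
    ring_nf
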